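/- Let ν be a quasi-stationary state for a quantum Markov semigroup T with respect to a subharmonic projection p₀, i.e. p₀^⊥ T_{t*}(ν) p₀^⊥ = tr(T_{t*}(ν) p₀^⊥) · ν for all t ≥ 0, with tr(T_{t*}(ν)p₀^⊥) > 0 for all t. Then there exists α ≥ 0 such that p₀^⊥ T_{t*}(ν) p₀^⊥ = e^{-αt} ν for all t ≥ 0. -/

import Mathlib

open Matrix
open scoped ComplexOrder

/-- A linear map on matrices is completely positive if all of its matrix
amplifications preserve positive semidefiniteness. -/
def IsCompletelyPositive {ι : Type*} [Fintype ι] [DecidableEq ι]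
    (Φ : Matrix ι ι ℂ →ₗ[ℂ] Matrix ι ι ℂ) : Prop :=
  ∀ (k : ℕ) (M : Matrix (Fin k × ι) (Fin k × ι) ℂ), M.PosSemidef →
    (Matrix.of fun (p q : Fin k × ι) =>
      Φ (Matrix.of fun a b => M (p.1, a) (q.1, b)) p.2 q.2).PosSemidef

lemma psd_diag_nonneg {n : Type*} [Fintype n] [DecidableEq n] {M : Matrix n n ℂ}
    (hM : M.PosSemidef) (i : n) : 0 ≤ M i i := by
  have h := hM.dotProduct_mulVec_nonneg (Pi.single i 1)
  simpa [mulVec_single, dotProduct, Pi.single_apply, apply_ite] using h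

lemma psd_trace_nonneg {n : Type*} [Fintype n] [DecidableEq n] {M : Matrix n n ℂ}
    (hM : M.PosSemidef) : 0 ≤ M.trace :=
  Finset.sum_nonneg fun i _ => psd_diag_nonneg hM i

lemma psd_row_col_zero {n : Type*} [Fintype n] [DecidableEq n] {M : Matrix n n ℂ}
    (hM : M.PosSemidef) {i : n} (h : M i i = 0) (j : n) : M i j = 0 ∧ M j i = 0 := by
  have hv : M *ᵥ Pi.single i 1 = 0 := by
    rw [← hM.dotProduct_mulVec_zero_iff]
    simpa [mulVec_single, dotProduct, Pi.single_apply, apply_ite] using h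
  have hji : M j i = 0 := by
    have := congrFun hv j
    simpa [mulVec_single] using this
  refine ⟨?_, hji⟩
  have := hM.isHermitian.apply i j
  rw [← this, hji, star_zero]

lemma IsCompletelyPositive.posSemidef_map {ι : Type*} [Fintype ι] [DecidableEq ι]
    {Φ : Matrix ι ι ℂ →ₗ[ℂ] Matrix ι ι ℂ} (hΦ : IsCompletelyPositive Φ)
    {X : Matrix ι ι ℂ} (hX : X.PosSemidef) : (Φ X).PosSemidef := by
  have h := hΦ 1 (X.submatrix Prod.snd Prod.snd) (hX.submatrix _)
  have h2 := h.submatrix (fun a : ι => ((0 : Fin 1), a))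
  convert h2 using 2
  rfl

/-- Key lemma: for a CP map leaving the range of `p` invariant,
the `q = 1 - p` corner of `Φ X` only depends on the `q`-corner of `X`. -/
lemma cp_corner {ι : Type*} [Fintype ι] [DecidableEq ι]
    {Φ : Matrix ι ι ℂ →ₗ[ℂ] Matrix ι ι ℂ} (hΦ : IsCompletelyPositive Φ)
    {p : Matrix ι ι ℂ} (hp : p * p = p) (hpH : p.IsHermitian)
    (hsub : ∀ ρ, p * ρ * p = ρ → p * Φ ρ * p = Φ ρ)
    {X : Matrix ι ι ℂ} (hX : X.PosSemidef) :
    (1 - p) * Φ X * (1 - p) = (1 - p) * Φ ((1 - p) * X * (1 - p)) * (1 - p) := by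
  set q : Matrix ι ι ℂ := 1 - p with hqdef
  have hqH : q.IsHermitian := (Matrix.isHermitian_one).sub hpH
  have hqp : q * p = 0 := by simp [hqdef, sub_mul, hp]
  have hpq : p * q = 0 := by simp [hqdef, mul_sub, hp]
  set e : Fin 2 → Matrix ι ι ℂ := ![p, q] with hedef
  have heH : ∀ i, (e i).IsHermitian := by
    intro i; fin_cases i <;> simpa [hedef] using by first | exact hpH | exact hqH
  set V : Matrix ι (Fin 2 × ι) ℂ := Matrix.of (fun a jb => e jb.1 a jb.2) with hVdef
  have hM : (Vᴴ * X * V).PosSemidef := hX.conjTranspose_mul_mul_same V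
  have hblock : ∀ i j : Fin 2,
      (Matrix.of fun a b => (Vᴴ * X * V) ((i, a).1, a) ((j, b).1, b)) = e i * X * e j := by
    intro i j
    ext a b
    simp only [Matrix.of_apply, Matrix.mul_apply, Matrix.conjTranspose_apply, hVdef]
    refine Finset.sum_congr rfl fun d _ => ?_
    congr 1
    refine Finset.sum_congr rfl fun c _ => ?_
    rw [(heH i).apply]
  have hR := hΦ 2 (Vᴴ * X * V) hM
  set R := (Matrix.of fun (P Q : Fin 2 × ι) =>
      Φ (Matrix.of fun a b => (Vᴴ * X * V) (P.1, a) (Q.1, b)) P.2 Q.2) with hRdef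
  have hRval : ∀ (i j : Fin 2) (a b : ι), R (i, a) (j, b) = Φ (e i * X * e j) a b := by
    intro i j a b
    simp only [hRdef, Matrix.of_apply]
    rw [show (Matrix.of fun a b => (Vᴴ * X * V) ((i, a).1, a) ((j, b).1, b))
        = e i * X * e j from hblock i j]
  have e0 : e 0 = p := rfl
  have e1 : e 1 = q := rfl
  set W : Matrix (Fin 2 × ι) (Fin 2 × ι) ℂ :=
    Matrix.of (fun P Q => if P.1 = Q.1 then q P.2 Q.2 else 0) with hWdef
  have hK : (Wᴴ * R * W).PosSemidef := hR.conjTranspose_mul_mul_same W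
  have hKval : ∀ (i j : Fin 2) (a b : ι),
      (Wᴴ * R * W) (i, a) (j, b) = (q * Φ (e i * X * e j) * q) a b := by
    intro i j a b
    simp only [Matrix.mul_apply, Matrix.conjTranspose_apply, Matrix.of_apply, hWdef,
      Fintype.sum_prod_type, apply_ite star, star_zero, ite_mul, zero_mul, mul_ite, mul_zero]
    rw [Finset.sum_comm]
    simp only [Finset.sum_ite_eq, Finset.sum_ite_eq', Finset.mem_univ, if_true]
    refine Finset.sum_congr rfl fun y _ => ?_
    congr 1
    rw [Finset.sum_comm]
    simp only [Finset.sum_ite_eq, Finset.sum_ite_eq', Finset.mem_univ, if_true]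
    refine Finset.sum_congr rfl fun x _ => ?_
    rw [hRval i j x y, hqH.apply]
  have hc00 : q * Φ (p * X * p) * q = 0 := by
    have hfix : p * (p * X * p) * p = p * X * p := by
      have : p * (p * X * p) * p = (p * p) * X * (p * p) := by noncomm_ring
      rw [this, hp]
    rw [← hsub _ hfix]
    have : q * (p * Φ (p * X * p) * p) * q = (q * p) * Φ (p * X * p) * (p * q) := by
      noncomm_ring
    rw [this, hqp, hpq]
    simp
  have hdiag0 : ∀ a : ι, (Wᴴ * R * W) (0, a) (0, a) = 0 := by
    intro a
    rw [hKval 0 0 a a, e0, hc00, Matrix.zero_apply]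
  have hc01 : q * Φ (p * X * q) * q = 0 := by
    ext a b
    have h := (psd_row_col_zero hK (hdiag0 a) ((1 : Fin 2), b)).1
    rw [hKval 0 1 a b, e0, e1] at h
    simpa using h
  have hc10 : q * Φ (q * X * p) * q = 0 := by
    ext b a
    have h := (psd_row_col_zero hK (hdiag0 a) ((1 : Fin 2), b)).2
    rw [hKval 1 0 b a, e0, e1] at h
    simpa using h
  have hdecomp : X = p * X * p + p * X * q + q * X * p + q * X * q := by
    rw [hqdef]; noncomm_ring
  conv_lhs => rw [hdecomp]
  rw [map_add, map_add, map_add]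
  have expand : q * (Φ (p * X * p) + Φ (p * X * q) + Φ (q * X * p) + Φ (q * X * q)) * q
      = q * Φ (p * X * p) * q + q * Φ (p * X * q) * q + q * Φ (q * X * p) * q
        + q * Φ (q * X * q) * q := by noncomm_ring
  rw [expand, hc00, hc01, hc10]
  simp

/-- If `ν` is a quasi-stationary state for a quantum Markov semigroup `T` (in the
Schrödinger picture, i.e. `T t` is the predual map `T_{t*}`) with respect to a
subharmonic projection `p₀`, and the survival probability is strictly positive,
then there is `α ≥ 0` with `p₀^⊥ T_{t*}(ν) p₀^⊥ = e^{-α t} ν` for all `t ≥ 0`. -/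
theorem qss_exponential_decay {ι : Type*} [Fintype ι] [DecidableEq ι]
    (T : ℝ → Matrix ι ι ℂ →ₗ[ℂ] Matrix ι ι ℂ)
    (hT0 : T 0 = LinearMap.id)
    (hsem : ∀ t, 0 ≤ t → ∀ s, 0 ≤ s → T (t + s) = (T t).comp (T s))
    (hTP : ∀ t, 0 ≤ t → ∀ x : Matrix ι ι ℂ, (T t x).trace = x.trace)
    (hCP : ∀ t, 0 ≤ t → IsCompletelyPositive (T t))
    (p₀ : Matrix ι ι ℂ) (hproj : p₀ * p₀ = p₀) (hherm : p₀.IsHermitian)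
    -- `p₀` is subharmonic: states supported in the range of `p₀` stay there
    (hsub : ∀ t, 0 ≤ t → ∀ ρ : Matrix ι ι ℂ, p₀ * ρ * p₀ = ρ →
      p₀ * T t ρ * p₀ = T t ρ)
    (ν : Matrix ι ι ℂ) (hν : ν.PosSemidef) (hν1 : ν.trace = 1)
    (hsupp : (1 - p₀) * ν * (1 - p₀) = ν)
    (hcont : Continuous fun t : ℝ => T t ν)
    -- `ν` is a quasi-stationary state with respect to `p₀`
    (hQSS : ∀ t, 0 ≤ t →
      (1 - p₀) * T t ν * (1 - p₀) = (Matrix.trace (T t ν * (1 - p₀))) • ν)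
    -- the survival probability is strictly positive
    (hsurv : ∀ t, 0 ≤ t → 0 < (Matrix.trace (T t ν * (1 - p₀))).re) :
    ∃ α : ℝ, 0 ≤ α ∧ ∀ t, 0 ≤ t →
      (1 - p₀) * T t ν * (1 - p₀) = (Real.exp (-(α * t)) : ℂ) • ν := by
  have hqq : (1 - p₀) * (1 - p₀) = (1 - p₀ : Matrix ι ι ℂ) := by
    simp [mul_sub, sub_mul, hproj]
  have hqH : (1 - p₀ : Matrix ι ι ℂ).IsHermitian := Matrix.isHermitian_one.sub hherm
  -- trace of the corner
  have htr : ∀ (r X : Matrix ι ι ℂ), r * r = r → (r * X * r).trace = (X * r).trace := by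
    intro r X hr
    rw [Matrix.trace_mul_cycle, hr, Matrix.trace_mul_comm]
  have hTpsd : ∀ t, 0 ≤ t → (T t ν).PosSemidef := fun t ht =>
    (hCP t ht).posSemidef_map hν
  have hqTq : ∀ t, 0 ≤ t → ((1 - p₀) * T t ν * (1 - p₀)).PosSemidef := by
    intro t ht
    have h := (hTpsd t ht).conjTranspose_mul_mul_same (1 - p₀)
    rwa [hqH.eq] at h
  have hpTp : ∀ t, 0 ≤ t → (p₀ * T t ν * p₀).PosSemidef := by
    intro t ht
    have h := (hTpsd t ht).conjTranspose_mul_mul_same p₀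
    rwa [hherm.eq] at h
  have hs_nonneg : ∀ t, 0 ≤ t → 0 ≤ (T t ν * (1 - p₀)).trace := by
    intro t ht
    rw [← htr _ _ hqq]
    exact psd_trace_nonneg (hqTq t ht)
  have hs_real : ∀ t, 0 ≤ t →
      (T t ν * (1 - p₀)).trace = (((T t ν * (1 - p₀)).trace.re : ℝ) : ℂ) := by
    intro t ht
    have h := Complex.nonneg_iff.mp (hs_nonneg t ht)
    exact Complex.ext rfl (by simpa using h.2.symm)
  -- the survival probability function
  set f : ℝ → ℝ := fun t => ((T t ν * (1 - p₀)).trace).re with hfdef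
  have hf_pos : ∀ t, 0 ≤ t → 0 < f t := fun t ht => hsurv t ht
  -- multiplicativity
  have hmul : ∀ t, 0 ≤ t → ∀ u, 0 ≤ u →
      (T (t + u) ν * (1 - p₀)).trace
        = (T t ν * (1 - p₀)).trace * (T u ν * (1 - p₀)).trace := by
    intro t ht u hu
    have h1 : T (t + u) ν = T t (T u ν) := by rw [hsem t ht u hu]; rfl
    have h2 : (1 - p₀) * T t (T u ν) * (1 - p₀)
        = (1 - p₀) * T t ((1 - p₀) * T u ν * (1 - p₀)) * (1 - p₀) :=
      cp_corner (hCP t ht) hproj hherm (fun ρ h => hsub t ht ρ h) (hTpsd u hu)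
    have h5 : (1 - p₀) * T (t + u) ν * (1 - p₀)
        = (T u ν * (1 - p₀)).trace • ((1 - p₀) * T t ν * (1 - p₀)) := by
      rw [h1, h2, hQSS u hu, _root_.map_smul]
      rw [Matrix.mul_smul, Matrix.smul_mul]
    have h6 := congrArg Matrix.trace h5
    rw [htr _ _ hqq, Matrix.trace_smul, htr _ _ hqq] at h6
    rw [h6, smul_eq_mul, mul_comm]
  have hfmul : ∀ t, 0 ≤ t → ∀ u, 0 ≤ u → f (t + u) = f t * f u := by
    intro t ht u hu
    have h := hmul t ht u hu
    rw [hs_real t ht, hs_real u hu, hs_real (t + u) (by linarith)] at h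
    exact_mod_cast h
  -- f ≤ 1
  have hfle : ∀ t, 0 ≤ t → f t ≤ 1 := by
    intro t ht
    have hsplit : (T t ν * (1 - p₀)).trace + (T t ν * p₀).trace = 1 := by
      rw [← Matrix.trace_add]
      have : T t ν * (1 - p₀) + T t ν * p₀ = T t ν := by noncomm_ring
      rw [this, hTP t ht, hν1]
    have hp_nonneg : 0 ≤ (T t ν * p₀).trace := by
      rw [← htr _ _ hproj]
      exact psd_trace_nonneg (hpTp t ht)
    have h1 := congrArg Complex.re hsplit
    rw [Complex.add_re, Complex.one_re] at h1
    have h2 := (Complex.nonneg_iff.mp hp_nonneg).1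
    have : f t = ((T t ν * (1 - p₀)).trace).re := rfl
    linarith [this]
  -- continuity of f
  have htrcont : Continuous fun X : Matrix ι ι ℂ => (X * (1 - p₀)).trace := by
    have : (fun X : Matrix ι ι ℂ => (X * (1 - p₀)).trace)
        = fun X => ∑ a, ∑ c, X a c * (1 - p₀) c a := by
      funext X
      simp [Matrix.trace, Matrix.diag, Matrix.mul_apply]
    rw [this]
    refine continuous_finset_sum _ fun a _ => continuous_finset_sum _ fun c _ => ?_
    exact (continuous_id.matrix_elem a c).mul continuous_const
  have hfcont : Continuous f := Complex.continuous_re.comp (htrcont.comp hcont)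
  -- f 0 = 1
  have hνq : ν * (1 - p₀) = ν := by
    conv_lhs => rw [← hsupp]
    rw [Matrix.mul_assoc ((1 - p₀) * ν) (1 - p₀) (1 - p₀), hqq, hsupp]
  have hf0 : f 0 = 1 := by
    have : (T 0 ν * (1 - p₀)).trace = 1 := by
      rw [hT0]
      simp [hνq, hν1]
    simp [hfdef, this]
  -- Cauchy functional equation
  have hmax : ∀ x : ℝ, (0 : ℝ) ≤ max x 0 := fun x => le_max_right x 0
  have emax : ∀ x : ℝ, max x 0 - max (-x) 0 = x := by
    intro x
    rcases le_total x 0 with h | h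
    · rw [max_eq_right h, max_eq_left (by linarith)]; ring
    · rw [max_eq_left h, max_eq_right (by linarith)]; ring
  have G2 : ∀ x y : ℝ, 0 ≤ x → 0 ≤ y →
      Real.log (f (x + y)) = Real.log (f x) + Real.log (f y) := by
    intro x y hx hy
    rw [hfmul x hx y hy, Real.log_mul (hf_pos x hx).ne' (hf_pos y hy).ne']
  set H : ℝ →+ ℝ :=
    { toFun := fun x => Real.log (f (max x 0)) - Real.log (f (max (-x) 0))
      map_zero' := by simp
      map_add' := by
        intro a b
        have key : max (a + b) 0 + (max (-a) 0 + max (-b) 0)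
            = max (-(a + b)) 0 + (max a 0 + max b 0) := by
          linarith [emax (a + b), emax a, emax b]
        have E1 := G2 (max (a + b) 0) (max (-a) 0 + max (-b) 0) (hmax _)
          (add_nonneg (hmax _) (hmax _))
        have E1' := G2 (max (-a) 0) (max (-b) 0) (hmax _) (hmax _)
        have E2 := G2 (max (-(a + b)) 0) (max a 0 + max b 0) (hmax _)
          (add_nonneg (hmax _) (hmax _))
        have E2' := G2 (max a 0) (max b 0) (hmax _) (hmax _)
        rw [key] at E1
        linarith } with hHdef
  have hHcont : Continuous H := by
    have c1 : Continuous fun x : ℝ => Real.log (f (max x 0)) :=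
      (hfcont.comp (continuous_id.max continuous_const)).log
        fun x => (hf_pos _ (hmax x)).ne'
    have c2 : Continuous fun x : ℝ => Real.log (f (max (-x) 0)) :=
      (hfcont.comp (continuous_neg.max continuous_const)).log
        fun x => (hf_pos _ (hmax (-x))).ne'
    exact c1.sub c2
  have hlin : ∀ x : ℝ, H x = x * H 1 := by
    intro x
    have := (H.toRealLinearMap hHcont).map_smul x 1
    simpa [AddMonoidHom.coe_toRealLinearMap, smul_eq_mul] using this
  have hHval : ∀ t : ℝ, 0 ≤ t → H t = Real.log (f t) := by
    intro t ht
    show Real.log (f (max t 0)) - Real.log (f (max (-t) 0)) = Real.log (f t)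
    rw [max_eq_left ht, max_eq_right (neg_nonpos.mpr ht), hf0, Real.log_one, sub_zero]
  refine ⟨-Real.log (f 1), ?_, ?_⟩
  · rw [neg_nonneg]
    exact Real.log_nonpos (hf_pos 1 zero_le_one).le (hfle 1 zero_le_one)
  · intro t ht
    have hlog : Real.log (f t) = t * Real.log (f 1) := by
      rw [← hHval t ht, hlin t, hHval 1 zero_le_one]
    have hft : f t = Real.exp (-(-Real.log (f 1) * t)) := by
      rw [← Real.exp_log (hf_pos t ht), hlog]
      congr 1
      ring
    rw [hQSS t ht, hs_real t ht]
    rw [show ((T t ν * (1 - p₀)).trace).re = f t from rfl, hft]
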